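/- Let G be an inverse semigroup, H ⊆ G a finite subsemigroup closed under the involution with idempotent set E_H, and A the unitization over ℂ of the semigroup algebra MonoidAlgebra ℂ G. For e ∈ E_H set p_e := e · ∏_{f ∈ E_H, e f ≠ e} (1 − f) ∈ A. If g ∈ G and e ∈ E_H satisfy p_e · (g* g) · p_e = p_e in A, then e · (g* g) = e in G. -/

import Mathlib

/-- An inverse semigroup: a semigroup with an involution `g ↦ g*` such that
`g** = g`, `(gh)* = h* g*`, `g g* g = g`, and any two idempotents commute. -/
class InverseSemigroup (G : Type*) extends Semigroup G, Star G where
  star_star : ∀ g : G, star (star g) = g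
  star_mul : ∀ g h : G, star (g * h) = star h * star g
  mul_star_mul_self : ∀ g : G, g * star g * g = g
  idem_mul_comm : ∀ e f : G, e * e = e → f * f = f → e * f = f * e

/-- The canonical image of `g : G` in the unitization over `ℂ` of the semigroup
algebra `MonoidAlgebra ℂ G`. -/
noncomputable def sgBasis {G : Type*} [InverseSemigroup G] (g : G) :
    Unitization ℂ (MonoidAlgebra ℂ G) :=
  Unitization.inr (MonoidAlgebra.single g (1 : ℂ))

/-- For a finite subinverse semigroup `H` (given as a finite subset of `G`), the element
`p_e = e ∏_{f ∈ E_H, e f ≠ e} (1 - f)` of the unitization of the semigroup algebra,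
where `E_H` is the set of idempotents of `H`. -/
noncomputable def minProjH {G : Type*} [InverseSemigroup G] [DecidableEq G]
    (H : Finset G) (e : G) : Unitization ℂ (MonoidAlgebra ℂ G) :=
  sgBasis e *
    (((H.filter fun f => f * f = f).filter fun f => e * f ≠ e).toList.map
      fun f => 1 - sgBasis f).prod

section Aux

variable {G : Type*} [InverseSemigroup G] [DecidableEq G]

lemma aux_idem_mul (x y : G) (hx : x * x = x) (hy : y * y = y) :
    (x * y) * (x * y) = x * y := by
  have h := InverseSemigroup.idem_mul_comm x y hx hy
  calc (x * y) * (x * y) = x * (y * x) * y := by simp [mul_assoc]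
    _ = x * (x * y) * y := by rw [← h]
    _ = (x * x) * (y * y) := by simp [mul_assoc]
    _ = x * y := by rw [hx, hy]

lemma aux_key (e x y : G) (hx : x * x = x) (hy : y * y = y) :
    e * (x * y) = e ↔ (e * x = e ∧ e * y = e) := by
  have h := InverseSemigroup.idem_mul_comm x y hx hy
  constructor
  · intro hxy
    constructor
    · have : e * x = e * (x * y) * x := by rw [hxy]
      rw [this]
      calc e * (x * y) * x = e * (x * (y * x)) := by simp [mul_assoc]
        _ = e * (x * (x * y)) := by rw [← h]
        _ = e * ((x * x) * y) := by simp [mul_assoc]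
        _ = e := by rw [hx, hxy]
    · have : e * y = e * (x * y) * y := by rw [hxy]
      rw [this]
      calc e * (x * y) * y = e * (x * (y * y)) := by simp [mul_assoc]
        _ = e := by rw [hy, hxy]
  · rintro ⟨h1, h2⟩
    calc e * (x * y) = (e * x) * y := by rw [mul_assoc]
      _ = e := by rw [h1, h2]

/-- The functional `χ_e` on the semigroup algebra. -/
noncomputable def chi0 (e : G) : MonoidAlgebra ℂ G →ₗ[ℂ] ℂ :=
  Finsupp.linearCombination ℂ (fun x => if e * x = e then (1 : ℂ) else 0) ∘ₗ
    (MonoidAlgebra.coeffLinearEquiv ℂ).toLinearMap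

lemma unit_fst_sub (a b : Unitization ℂ (MonoidAlgebra ℂ G)) :
    (a - b).fst = a.fst - b.fst := rfl

lemma unit_snd_sub (a b : Unitization ℂ (MonoidAlgebra ℂ G)) :
    (a - b).snd = a.snd - b.snd := rfl

lemma chi0_apply (e : G) (a : MonoidAlgebra ℂ G) :
    chi0 e a = a.coeff.sum fun x c => if e * x = e then c else 0 := by
  have h : chi0 e a = a.coeff.sum fun x c => c • (if e * x = e then (1 : ℂ) else 0) :=
    Finsupp.linearCombination_apply _ a.coeff
  rw [h]
  refine Finsupp.sum_congr fun x _ => ?_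
  split <;> simp

lemma chi0_single (e x : G) (c : ℂ) :
    chi0 e (MonoidAlgebra.single x c) = if e * x = e then c else 0 := by
  rw [chi0_apply, MonoidAlgebra.coeff_single]
  refine Finsupp.sum_single_index ?_
  simp

lemma chi0_mul (e : G) (a b : MonoidAlgebra ℂ G)
    (ha : ∀ x ∈ a.coeff.support, x * x = x) (hb : ∀ y ∈ b.coeff.support, y * y = y) :
    chi0 e (a * b) = chi0 e a * chi0 e b := by
  rw [MonoidAlgebra.mul_def, map_finsuppSum]
  have hinner : ∀ x c1, chi0 e (b.coeff.sum fun y c2 => MonoidAlgebra.single (x * y) (c1 * c2))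
      = b.coeff.sum fun y c2 => chi0 e (MonoidAlgebra.single (x * y) (c1 * c2)) :=
    fun x c1 => map_finsuppSum _ _ _
  simp only [hinner, chi0_single]
  rw [chi0_apply, chi0_apply, Finsupp.sum_mul]
  refine Finsupp.sum_congr fun x hx => ?_
  rw [Finsupp.mul_sum]
  refine Finsupp.sum_congr fun y hy => ?_
  have hk := aux_key e x y (ha x hx) (hb y hy)
  simp only [hk]
  by_cases h1 : e * x = e <;> by_cases h2 : e * y = e <;> simp [h1, h2]

/-- The functional `χ_e` on the unitization. -/
noncomputable def chi (e : G) (a : Unitization ℂ (MonoidAlgebra ℂ G)) : ℂ :=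
  a.fst + chi0 e a.snd

/-- "Supported on idempotents" predicate. -/
def idemSupp (a : Unitization ℂ (MonoidAlgebra ℂ G)) : Prop :=
  ∀ x ∈ a.snd.coeff.support, x * x = x

lemma idemSupp_one : idemSupp (1 : Unitization ℂ (MonoidAlgebra ℂ G)) := by
  intro x hx
  simp [Unitization.snd_one] at hx

lemma idemSupp_mul {a b : Unitization ℂ (MonoidAlgebra ℂ G)}
    (ha : idemSupp a) (hb : idemSupp b) : idemSupp (a * b) := by
  intro x hx
  rw [Unitization.snd_mul, MonoidAlgebra.coeff_add, MonoidAlgebra.coeff_add,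
    MonoidAlgebra.coeff_smul, MonoidAlgebra.coeff_smul] at hx
  have h1 := Finsupp.support_add hx
  rw [Finset.mem_union] at h1
  rcases h1 with h1 | h1
  · have h2 := Finsupp.support_add h1
    rw [Finset.mem_union] at h2
    rcases h2 with h2 | h2
    · exact hb x (Finsupp.support_smul h2)
    · exact ha x (Finsupp.support_smul h2)
  · have h2 := MonoidAlgebra.support_coeff_mul_subset _ _ h1
    rw [Finset.mem_mul] at h2
    obtain ⟨y, hy, z, hz, rfl⟩ := h2
    exact aux_idem_mul y z (ha y hy) (hb z hz)

lemma chi_one (e : G) : chi e (1 : Unitization ℂ (MonoidAlgebra ℂ G)) = 1 := by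
  simp [chi]

lemma chi_mul (e : G) {a b : Unitization ℂ (MonoidAlgebra ℂ G)}
    (ha : idemSupp a) (hb : idemSupp b) : chi e (a * b) = chi e a * chi e b := by
  simp only [chi, Unitization.fst_mul, Unitization.snd_mul, map_add, map_smul,
    chi0_mul e _ _ ha hb, smul_eq_mul]
  ring

lemma idemSupp_sgBasis (x : G) (hx : x * x = x) : idemSupp (sgBasis x) := by
  intro y hy
  rw [sgBasis, Unitization.snd_inr, MonoidAlgebra.coeff_single] at hy
  have := Finsupp.support_single_subset hy
  simp at this
  subst this
  exact hx

lemma chi_sgBasis (e x : G) : chi e (sgBasis x) = if e * x = e then 1 else 0 := by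
  simp [chi, sgBasis, chi0_single]

lemma idemSupp_factor (f : G) : idemSupp (1 - sgBasis f) → True := fun _ => trivial

lemma list_prod_props (e : G) (l : List G) (hl : ∀ f ∈ l, f * f = f ∧ e * f ≠ e) :
    idemSupp ((l.map fun f => 1 - sgBasis f).prod) ∧
      chi e ((l.map fun f => 1 - sgBasis f).prod) = 1 := by
  induction l with
  | nil => exact ⟨idemSupp_one, chi_one e⟩
  | cons f t ih =>
    obtain ⟨hf1, hf2⟩ := hl f List.mem_cons_self
    obtain ⟨iht1, iht2⟩ := ih fun x hx => hl x (List.mem_cons_of_mem f hx)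
    have hQf : idemSupp (1 - sgBasis f) := by
      intro y hy
      rw [unit_snd_sub, Unitization.snd_one, sgBasis, Unitization.snd_inr,
        zero_sub] at hy
      rw [MonoidAlgebra.coeff_neg, MonoidAlgebra.coeff_single, Finsupp.support_neg] at hy
      have := Finsupp.support_single_subset hy
      simp at this
      subst this
      exact hf1
    have hchif : chi e (1 - sgBasis f) = 1 := by
      simp only [chi, unit_fst_sub, Unitization.fst_one, unit_snd_sub,
        Unitization.snd_one, sgBasis, Unitization.fst_inr, Unitization.snd_inr, zero_sub,
        map_neg, chi0_single]
      rw [if_neg hf2]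
      ring
    rw [List.map_cons, List.prod_cons]
    exact ⟨idemSupp_mul hQf iht1, by rw [chi_mul e hQf iht1, hchif, iht2, one_mul]⟩

end Aux

/-- If `g ∈ G` and an idempotent `e ∈ E_H` satisfy `p_e (g* g) p_e = p_e` in the
unitization of the semigroup algebra, then `e (g* g) = e` in `G`. -/
theorem stmt_15 {G : Type*} [InverseSemigroup G] [DecidableEq G] (H : Finset G)
    (hmul : ∀ a ∈ H, ∀ b ∈ H, a * b ∈ H) (hstar : ∀ a ∈ H, star a ∈ H)
    (g : G) (e : G) (heH : e ∈ H) (he : e * e = e)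
    (hp : minProjH H e * sgBasis (star g * g) * minProjH H e = minProjH H e) :
    e * (star g * g) = e := by
  set s := star g * g with hs_def
  have hs : s * s = s := by
    calc s * s = star g * (g * star g * g) := by simp [hs_def, mul_assoc]
      _ = star g * g := by rw [InverseSemigroup.mul_star_mul_self]
      _ = s := rfl
  set l := ((H.filter fun f => f * f = f).filter fun f => e * f ≠ e).toList with hl_def
  have hl : ∀ f ∈ l, f * f = f ∧ e * f ≠ e := by
    intro f hf
    rw [hl_def, Finset.mem_toList, Finset.mem_filter, Finset.mem_filter] at hf
    exact ⟨hf.1.2, hf.2⟩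
  obtain ⟨hQL, hchiL⟩ := list_prod_props e l hl
  have hQe : idemSupp (sgBasis e) := idemSupp_sgBasis e he
  have hQP : idemSupp (minProjH H e) := idemSupp_mul hQe hQL
  have hchiP : chi e (minProjH H e) = 1 := by
    rw [minProjH, chi_mul e hQe hQL, chi_sgBasis, hchiL, if_pos he, one_mul]
  have hQS : idemSupp (sgBasis s) := idemSupp_sgBasis s hs
  have key : chi e (minProjH H e * sgBasis s * minProjH H e) = chi e (minProjH H e) := by
    rw [hp]
  rw [chi_mul e (idemSupp_mul hQP hQS) hQP, chi_mul e hQP hQS, hchiP, one_mul, mul_one,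
    chi_sgBasis] at key
  by_contra hne
  rw [if_neg hne] at key
  exact zero_ne_one key
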